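/- If I ⊆ {1,…,n} is a set of consecutive indices with β_i = 1 for every i ∈ I (a run of 0's in the binary string), then every vector v ∈ ℝⁿ that vanishes outside I and satisfies Σ_{i∈I} v_i = 0 is an eigenvector of the Seidel matrix S for the eigenvalue −1, i.e., S v = −v. -/

import Mathlib

open Polynomial Matrix

theorem stmt_8 (n : ℕ) (hn : 2 ≤ n) (β : ℕ → ℝ)
    (hβ : ∀ i, 1 ≤ i → i ≤ n → β i = 1 ∨ β i = -1)
    (S : Matrix (Fin n) (Fin n) ℝ)
    (hS : ∀ i j : Fin n, S i j = if i = j then 0 else β (max (i : ℕ) (j : ℕ) + 1))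
    (I : Finset (Fin n))
    (hIcons : ∀ i j l : Fin n, i ∈ I → l ∈ I → i ≤ j → j ≤ l → j ∈ I)
    (hIβ : ∀ i ∈ I, β ((i : ℕ) + 1) = 1)
    (v : Fin n → ℝ) (hv0 : ∀ i, i ∉ I → v i = 0)
    (hvsum : ∑ i ∈ I, v i = 0) :
    S.mulVec v = (-1 : ℝ) • v := by
  funext i
  have hsum : S.mulVec v i = ∑ j ∈ I, S i j * v j := by
    rw [mulVec, dotProduct]
    rw [← Finset.sum_subset (Finset.subset_univ I)]
    intro j _ hj
    rw [hv0 j hj, mul_zero]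
  rw [hsum]
  simp only [Pi.smul_apply, smul_eq_mul]
  by_cases hi : i ∈ I
  · have : ∀ j ∈ I, S i j * v j = (if i = j then 0 else v j) := by
      intro j hj
      rw [hS]
      by_cases hij : i = j
      · simp [hij]
      · simp only [hij, if_false]
        have hmax : β (max (i : ℕ) (j : ℕ) + 1) = 1 := by
          rcases le_total (i : ℕ) (j : ℕ) with h | h
          · rw [max_eq_right h]; exact hIβ j hj
          · rw [max_eq_left h]; exact hIβ i hi
        rw [hmax, one_mul]
    rw [Finset.sum_congr rfl this]
    have h1 : (∑ x ∈ I, if i = x then 0 else v x) = ∑ x ∈ I.erase i, v x := by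
      rw [← Finset.sum_subset (Finset.erase_subset i I)]
      · exact Finset.sum_congr rfl fun x hx =>
          if_neg (Ne.symm (Finset.ne_of_mem_erase hx))
      · intro x hx hxe
        have hix : i = x := by
          by_contra hne
          exact hxe (Finset.mem_erase.mpr ⟨Ne.symm hne, hx⟩)
        simp [hix]
    rw [h1, Finset.sum_erase_eq_sub hi, hvsum]
    ring
  · rw [hv0 i hi, mul_zero]
    by_cases h : ∀ j ∈ I, j < i
    · have : ∀ j ∈ I, S i j * v j = β ((i : ℕ) + 1) * v j := by
        intro j hj
        rw [hS]
        have hji := h j hj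
        have hne : i ≠ j := fun e => absurd hji (by simp [e])
        simp [hne, max_eq_left (le_of_lt (Fin.lt_iff_val_lt_val.mp hji))]
      rw [Finset.sum_congr rfl this, ← Finset.mul_sum, hvsum, mul_zero]
    · push_neg at h
      obtain ⟨j0, hj0, hij0⟩ := h
      have hall : ∀ j ∈ I, i < j := by
        intro j hj
        by_contra hle
        push_neg at hle
        exact hi (hIcons j i j0 hj hj0 hle hij0)
      have : ∀ j ∈ I, S i j * v j = v j := by
        intro j hj
        rw [hS]
        have hij := hall j hj
        have hne : i ≠ j := fun e => absurd hij (by simp [e])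
        simp [hne, max_eq_right (le_of_lt (Fin.lt_iff_val_lt_val.mp hij)), hIβ j hj]
      rw [Finset.sum_congr rfl this, hvsum]
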